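/- arXiv:1106.0144 — 2 statements merged into one kernel-verified Lean document; each statement's English description precedes it below -/
import Mathlib

section
/- Let H1, ..., Hm be real Hilbert spaces (m ≥ 2), G a real Hilbert space, Lᵢ : Hᵢ → G bounded linear operators with cyclic convention L_{m+1} = L₁ and x_{m+1} = x₁, and set χ = 2·max_{1≤i≤m} ‖Lᵢ‖². Then the operator B : H₁ ⊕ ⋯ ⊕ H_m → H₁ ⊕ ⋯ ⊕ H_m given by B(x₁,...,x_m) = (L₁*(L₁x₁ − L₂x₂), ..., L_m*(L_mx_m − L₁x₁)) is χ⁻¹-cocoercive, i.e., for all x, y in the product space, ⟨x − y, Bx − By⟩ ≥ χ⁻¹‖Bx − By‖². -/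
open RealInnerProductSpace

/-- The cyclic difference operator
`B(x₁,…,x_m) = (L₁*(L₁x₁ − L₂x₂), …, L_m*(L_mx_m − L₁x₁))` is `χ⁻¹`-cocoercive with
`χ = 2 maxᵢ ‖Lᵢ‖²`. -/
theorem stmt3 {m : ℕ} [NeZero m] (hm : 2 ≤ m)
    {G : Type*} [NormedAddCommGroup G] [InnerProductSpace ℝ G] [CompleteSpace G]
    {H : Fin m → Type*} [∀ i, NormedAddCommGroup (H i)] [∀ i, InnerProductSpace ℝ (H i)]
    [∀ i, CompleteSpace (H i)]
    (L : ∀ i, H i →L[ℝ] G) (hL : ∀ i, L i ≠ 0)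
    (B : (∀ i, H i) → ∀ i, H i)
    (hB : ∀ x i, B x i = (ContinuousLinearMap.adjoint (L i))
      (L i (x i) - L (i + 1) (x (i + 1))))
    (χ : ℝ)
    (hχ : χ = 2 * (Finset.univ.sup' (Finset.univ_nonempty) fun i => ‖L i‖ ^ 2)) :
    ∀ x y : ∀ i, H i,
      χ⁻¹ * ∑ i, ‖B x i - B y i‖ ^ 2 ≤ ∑ i, ⟪x i - y i, B x i - B y i⟫ := by
  intro x y
  set M : ℝ := Finset.univ.sup' (Finset.univ_nonempty) fun i : Fin m => ‖L i‖ ^ 2 with hM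
  have hMle : ∀ i : Fin m, ‖L i‖ ^ 2 ≤ M := fun i => by
    rw [hM]
    exact Finset.le_sup' (fun j : Fin m => ‖L j‖ ^ 2) (Finset.mem_univ i)
  have hMpos : 0 < M := by
    refine lt_of_lt_of_le ?_ (hMle 0)
    have : 0 < ‖L 0‖ := norm_pos_iff.mpr (hL 0)
    positivity
  have hχpos : 0 < χ := by rw [hχ]; linarith
  set u : Fin m → G := fun i => L i (x i) - L i (y i) with hu
  set w : Fin m → G := fun i => u i - u (i + 1) with hw
  have hBw : ∀ i, B x i - B y i = (ContinuousLinearMap.adjoint (L i)) (w i) := by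
    intro i
    rw [hB, hB, ← map_sub]
    congr 1
    simp only [hw, hu]
    abel
  have hRHS : ∑ i, ⟪x i - y i, B x i - B y i⟫ = ∑ i, ⟪u i, w i⟫ := by
    refine Finset.sum_congr rfl fun i _ => ?_
    rw [hBw i, ContinuousLinearMap.adjoint_inner_right]
    simp [hu]
  have hcyc : ∑ i : Fin m, ‖u (i + 1)‖ ^ 2 = ∑ i : Fin m, ‖u i‖ ^ 2 :=
    Fintype.sum_equiv (Equiv.addRight (1 : Fin m)) _ _ (fun i => rfl)
  have hkey : ∑ i, ⟪u i, w i⟫ = (2:ℝ)⁻¹ * ∑ i, ‖w i‖ ^ 2 := by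
    have h1 : ∀ i : Fin m, ‖w i‖ ^ 2
        = ‖u i‖ ^ 2 - 2 * ⟪u i, u (i+1)⟫ + ‖u (i+1)‖ ^ 2 := by
      intro i
      rw [hw]
      rw [norm_sub_sq_real]
    have h2 : ∀ i : Fin m, ⟪u i, w i⟫ = ‖u i‖ ^ 2 - ⟪u i, u (i+1)⟫ := by
      intro i
      rw [hw, inner_sub_right, real_inner_self_eq_norm_sq]
    simp only [h1, h2]
    rw [Finset.sum_sub_distrib]
    conv_rhs => rw [Finset.sum_add_distrib, Finset.sum_sub_distrib, hcyc]
    rw [← Finset.mul_sum]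
    ring
  rw [hRHS, hkey]
  have hterm : ∀ i : Fin m, ‖B x i - B y i‖ ^ 2 ≤ ‖L i‖ ^ 2 * ‖w i‖ ^ 2 := by
    intro i
    rw [hBw i]
    have h3 : ‖(ContinuousLinearMap.adjoint (L i)) (w i)‖ ≤ ‖L i‖ * ‖w i‖ := by
      calc ‖(ContinuousLinearMap.adjoint (L i)) (w i)‖
          ≤ ‖ContinuousLinearMap.adjoint (L i)‖ * ‖w i‖ :=
            (ContinuousLinearMap.adjoint (L i)).le_opNorm (w i)
        _ = ‖L i‖ * ‖w i‖ := by
            rw [ContinuousLinearMap.adjoint.norm_map (L i)]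
    calc ‖(ContinuousLinearMap.adjoint (L i)) (w i)‖ ^ 2
        ≤ (‖L i‖ * ‖w i‖) ^ 2 := by
          apply pow_le_pow_left₀ (norm_nonneg _) h3
      _ = ‖L i‖ ^ 2 * ‖w i‖ ^ 2 := by ring
  calc χ⁻¹ * ∑ i, ‖B x i - B y i‖ ^ 2
      ≤ χ⁻¹ * ∑ i, ‖L i‖ ^ 2 * ‖w i‖ ^ 2 := by
        apply mul_le_mul_of_nonneg_left _ (le_of_lt (inv_pos.mpr hχpos))
        exact Finset.sum_le_sum fun i _ => hterm i
    _ ≤ (2:ℝ)⁻¹ * ∑ i, ‖w i‖ ^ 2 := by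
        rw [Finset.mul_sum, Finset.mul_sum]
        refine Finset.sum_le_sum fun i _ => ?_
        have hwnn : (0:ℝ) ≤ ‖w i‖ ^ 2 := by positivity
        have hle : χ⁻¹ * ‖L i‖ ^ 2 ≤ (2:ℝ)⁻¹ := by
          rw [inv_mul_le_iff₀ hχpos, hχ]
          have := hMle i
          nlinarith
        calc χ⁻¹ * (‖L i‖ ^ 2 * ‖w i‖ ^ 2) = (χ⁻¹ * ‖L i‖ ^ 2) * ‖w i‖ ^ 2 := by ring
          _ ≤ (2:ℝ)⁻¹ * ‖w i‖ ^ 2 := mul_le_mul_of_nonneg_right hle hwnn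
end

section
/- Let H be a real Hilbert space, let A : H → 2^H be maximally monotone, and let B : H → H be monotone and χ-Lipschitzian with zer(A + B) ≠ ∅. Define one exact iteration of the forward-backward-forward scheme: given x and γ ∈ (0, 1/χ), set y = x − γ Bx, p = J_{γA} y, q = p − γ Bp, and x⁺ = x − y + q. Then for every z ∈ zer(A + B), ‖x⁺ − z‖² ≤ ‖x − z‖² − (1 − γ²χ²)‖x − p‖². (Fejér-type decrease of the Tseng iteration.) -/
open RealInnerProductSpace

/-- Fejér-type decrease of one exact Tseng (forward-backward-forward) iteration:
with `y = x − γBx`, `p = J_{γA}y`, `q = p − γBp`, `x⁺ = x − y + q`, one has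
`‖x⁺ − z‖² ≤ ‖x − z‖² − (1 − γ²χ²)‖x − p‖²` for every `z ∈ zer(A+B)`. -/
theorem stmt17
    {H : Type*} [NormedAddCommGroup H] [InnerProductSpace ℝ H] [CompleteSpace H]
    (A : H → Set H)
    (hAmono : ∀ x y u v : H, u ∈ A x → v ∈ A y → 0 ≤ ⟪x - y, u - v⟫)
    (hAmax : ∀ x u, (∀ y, ∀ v ∈ A y, 0 ≤ ⟪x - y, u - v⟫) → u ∈ A x)
    (B : H → H) (χ : ℝ) (hχ : 0 < χ)
    (hBmono : ∀ x y : H, 0 ≤ ⟪x - y, B x - B y⟫)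
    (hBlip : ∀ x y : H, ‖B x - B y‖ ≤ χ * ‖x - y‖)
    (γ : ℝ) (hγ0 : 0 < γ) (hγ1 : γ < 1 / χ)
    (x p : H)
    -- `p = J_{γA}(x − γBx)`, i.e. `x − γBx − p ∈ γ A p`
    (hp : ∃ w ∈ A p, x - γ • B x - p = γ • w)
    (z : H) (hz : -(B z) ∈ A z) :
    ‖(x - (x - γ • B x) + (p - γ • B p)) - z‖ ^ 2 ≤
      ‖x - z‖ ^ 2 - (1 - γ ^ 2 * χ ^ 2) * ‖x - p‖ ^ 2 := by
  obtain ⟨w, hw, hweq⟩ := hp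
  have h1 : 0 ≤ ⟪p - z, w - (-(B z))⟫ := hAmono p z w (-(B z)) hw hz
  have h2 : 0 ≤ ⟪p - z, B p - B z⟫ := hBmono p z
  have hkey : 0 ≤ ⟪p - z, (x - p) - γ • (B x - B p)⟫ := by
    have hv : (x - p) - γ • (B x - B p) = γ • (w - (-(B z))) + γ • (B p - B z) := by
      rw [smul_sub γ w (-(B z)), hweq.symm]; module
    rw [hv, inner_add_right, inner_smul_right, inner_smul_right]
    nlinarith
  have hv2 : (x - (x - γ • B x) + (p - γ • B p)) - z
      = ((x - z) - (x - p)) + γ • (B x - B p) := by module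
  have hpz : p - z = (x - z) - (x - p) := by abel
  have hkey' : γ * ⟪(x - z) - (x - p), B x - B p⟫ ≤ ⟪x - z, x - p⟫ - ‖x - p‖ ^ 2 := by
    rw [hpz, inner_sub_right, real_inner_smul_right, inner_sub_left,
      real_inner_self_eq_norm_sq] at hkey
    linarith
  have hd : ‖γ • (B x - B p)‖ ≤ γ * (χ * ‖x - p‖) := by
    rw [norm_smul, Real.norm_eq_abs, abs_of_pos hγ0]
    exact mul_le_mul_of_nonneg_left (hBlip x p) hγ0.le
  have hdn : (0:ℝ) ≤ ‖γ • (B x - B p)‖ := norm_nonneg _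
  have hd2 : ‖γ • (B x - B p)‖ ^ 2 ≤ γ ^ 2 * χ ^ 2 * ‖x - p‖ ^ 2 := by
    nlinarith [norm_nonneg (x - p)]
  have expand : ‖(x - (x - γ • B x) + (p - γ • B p)) - z‖ ^ 2
      = ‖x - z‖ ^ 2 - 2 * ⟪x - z, x - p⟫ + ‖x - p‖ ^ 2
        + 2 * (γ * ⟪(x - z) - (x - p), B x - B p⟫) + ‖γ • (B x - B p)‖ ^ 2 := by
    rw [hv2, @norm_add_sq_real, @norm_sub_sq_real, real_inner_smul_right]
    try ring
  rw [expand]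
  nlinarith
end
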